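/- For every unit vector ψ in ℂ³⊗ℂ³⊗ℂ³ there exist orthonormal bases {f₀⁽ᵏ⁾, f₁⁽ᵏ⁾, f₂⁽ᵏ⁾} of each of the three factors (k = 1,2,3) such that, writing |ijk⟩ = fᵢ⁽¹⁾⊗fⱼ⁽²⁾⊗fₖ⁽³⁾, all of the following overlap coefficients vanish: ⟨100|ψ⟩ = ⟨010|ψ⟩ = ⟨001|ψ⟩ = 0, ⟨200|ψ⟩ = ⟨020|ψ⟩ = ⟨002|ψ⟩ = 0, and ⟨211|ψ⟩ = ⟨121|ψ⟩ = ⟨112|ψ⟩ = 0. -/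

import Mathlib

open scoped ComplexInnerProductSpace

/-- The product state `a ⊗ b ⊗ c` of three qutrits, as a vector in
`ℂ³ ⊗ ℂ³ ⊗ ℂ³ ≃ ℂ^(3×3×3)` with the standard inner product, so that
`⟪prod3 a b c, prod3 x y z⟫ = ⟪a,x⟫ * ⟪b,y⟫ * ⟪c,z⟫`. -/
noncomputable def prod3 (a b c : EuclideanSpace ℂ (Fin 3)) :
    EuclideanSpace ℂ (Fin 3 × Fin 3 × Fin 3) :=
  WithLp.toLp 2 (fun p => a p.1 * b p.2.1 * c p.2.2)

section Key

variable {E : Type*} [NormedAddCommGroup E] [InnerProductSpace ℂ E] [FiniteDimensional ℂ E]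

lemma key_lemma (S : Submodule ℂ E) (w e : E)
    (he : e ∈ S) (hen : ‖e‖ = 1)
    (hmax : ∀ a ∈ S, ‖a‖ = 1 → ‖(⟪a, w⟫ : ℂ)‖ ≤ ‖(⟪e, w⟫ : ℂ)‖)
    (v : E) (hv : v ∈ S) (hve : ⟪v, e⟫ = 0) : ⟪v, w⟫ = 0 := by
  haveI : CompleteSpace S := FiniteDimensional.complete ℂ S
  set w' : E := (S.orthogonalProjectionOnto w : E) with hw'
  have hw'S : w' ∈ S := SetLike.coe_mem _
  have hmem : ∀ a ∈ S, (⟪a, w⟫ : ℂ) = ⟪a, w'⟫ := by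
    intro a ha
    have h : (⟪w - w', a⟫ : ℂ) = 0 := Submodule.starProjection_inner_eq_zero (K := S) w a ha
    have h2 : (⟪a, w - w'⟫ : ℂ) = 0 := inner_eq_zero_symm.mp h
    rw [inner_sub_right, sub_eq_zero] at h2
    exact h2
  rcases eq_or_ne w' 0 with h0 | h0
  · rw [hmem v hv, h0, inner_zero_right]
  · have hle : ‖(⟪e, w'⟫ : ℂ)‖ ≤ ‖w'‖ := by
      calc ‖(⟪e, w'⟫ : ℂ)‖ ≤ ‖e‖ * ‖w'‖ := norm_inner_le_norm _ _
      _ = ‖w'‖ := by rw [hen, one_mul]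
    have hpos : (0:ℝ) < ‖w'‖ := norm_pos_iff.mpr h0
    have hge : ‖w'‖ ≤ ‖(⟪e, w'⟫ : ℂ)‖ := by
      set a : E := ((‖w'‖⁻¹ : ℝ) : ℂ) • w' with ha
      have han : ‖a‖ = 1 := by
        rw [ha, norm_smul, Complex.norm_real, Real.norm_eq_abs,
          abs_of_nonneg (by positivity)]
        field_simp
      have haS : a ∈ S := S.smul_mem _ hw'S
      have h1 : (⟪a, w'⟫ : ℂ) = ((‖w'‖⁻¹ : ℝ) : ℂ) * ((‖w'‖ : ℝ) : ℂ) ^ 2 := by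
        rw [ha, inner_smul_left, inner_self_eq_norm_sq_to_K]
        simp [Complex.conj_ofReal]
      have h2 := hmax a haS han
      rw [hmem a haS, hmem e he, h1] at h2
      have h3 : ‖(((‖w'‖⁻¹ : ℝ) : ℂ) * ((‖w'‖ : ℝ) : ℂ) ^ 2)‖ = ‖w'‖ := by
        rw [show (((‖w'‖⁻¹ : ℝ) : ℂ) * ((‖w'‖ : ℝ) : ℂ) ^ 2) = ((‖w'‖⁻¹ * ‖w'‖ ^ 2 : ℝ) : ℂ) by
          push_cast; ring, Complex.norm_real, Real.norm_eq_abs, abs_of_nonneg (by positivity)]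
        field_simp
      rwa [h3] at h2
    have heq : ‖(⟪e, w'⟫ : ℂ)‖ = ‖w'‖ := le_antisymm hle hge
    set c : ℂ := ⟪e, w'⟫ with hc
    have horth : (⟪c • e, w' - c • e⟫ : ℂ) = 0 := by
      rw [inner_smul_left, inner_sub_right, inner_smul_right,
        inner_self_eq_norm_sq_to_K, hen]
      push_cast
      ring
    have hpyth : ‖w'‖ ^ 2 = ‖c • e‖ ^ 2 + ‖w' - c • e‖ ^ 2 := by
      have hsplit : w' = c • e + (w' - c • e) := by abel
      calc ‖w'‖ ^ 2 = ‖c • e + (w' - c • e)‖ ^ 2 := by rw [← hsplit]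
      _ = ‖c • e‖ ^ 2 + 2 * RCLike.re (⟪c • e, w' - c • e⟫ : ℂ) + ‖w' - c • e‖ ^ 2 :=
        norm_add_sq _ _
      _ = ‖c • e‖ ^ 2 + ‖w' - c • e‖ ^ 2 := by rw [horth]; simp
    have hcnorm : ‖c • e‖ = ‖w'‖ := by rw [norm_smul, hen, mul_one, hc, heq]
    rw [hcnorm] at hpyth
    have hzero : ‖w' - c • e‖ = 0 := by nlinarith [norm_nonneg (w' - c • e)]
    have hw'e : w' = c • e := sub_eq_zero.mp (norm_eq_zero.mp hzero)
    rw [hmem v hv, hw'e, inner_smul_right, hve, mul_zero]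
end Key

noncomputable def wA (b c : EuclideanSpace ℂ (Fin 3))
    (ψ : EuclideanSpace ℂ (Fin 3 × Fin 3 × Fin 3)) : EuclideanSpace ℂ (Fin 3) :=
  WithLp.toLp 2 (fun i => ∑ j, ∑ k, (starRingEnd ℂ) (b j) * (starRingEnd ℂ) (c k) * ψ (i, j, k))

noncomputable def wB (a c : EuclideanSpace ℂ (Fin 3))
    (ψ : EuclideanSpace ℂ (Fin 3 × Fin 3 × Fin 3)) : EuclideanSpace ℂ (Fin 3) :=
  WithLp.toLp 2 (fun j => ∑ i, ∑ k, (starRingEnd ℂ) (a i) * (starRingEnd ℂ) (c k) * ψ (i, j, k))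

noncomputable def wC (a b : EuclideanSpace ℂ (Fin 3))
    (ψ : EuclideanSpace ℂ (Fin 3 × Fin 3 × Fin 3)) : EuclideanSpace ℂ (Fin 3) :=
  WithLp.toLp 2 (fun k => ∑ i, ∑ j, (starRingEnd ℂ) (a i) * (starRingEnd ℂ) (b j) * ψ (i, j, k))

lemma inner_prod3 (a b c : EuclideanSpace ℂ (Fin 3))
    (ψ : EuclideanSpace ℂ (Fin 3 × Fin 3 × Fin 3)) :
    (⟪prod3 a b c, ψ⟫ : ℂ) = ∑ i, ∑ j, ∑ k,
      (starRingEnd ℂ) (a i) * (starRingEnd ℂ) (b j) * (starRingEnd ℂ) (c k) * ψ (i, j, k) := by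
  simp only [PiLp.inner_apply, RCLike.inner_apply, prod3, PiLp.toLp_apply, Fintype.sum_prod_type, map_mul]
  exact Finset.sum_congr rfl fun i _ => Finset.sum_congr rfl fun j _ =>
    Finset.sum_congr rfl fun k _ => by ring

lemma inner_wA (a b c : EuclideanSpace ℂ (Fin 3)) (ψ : EuclideanSpace ℂ (Fin 3 × Fin 3 × Fin 3)) :
    (⟪a, wA b c ψ⟫ : ℂ) = ⟪prod3 a b c, ψ⟫ := by
  rw [inner_prod3]
  simp only [PiLp.inner_apply, RCLike.inner_apply, wA, PiLp.toLp_apply, Finset.sum_mul]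
  exact Finset.sum_congr rfl fun i _ => Finset.sum_congr rfl fun j _ =>
    Finset.sum_congr rfl fun k _ => by ring

lemma inner_wB (a b c : EuclideanSpace ℂ (Fin 3)) (ψ : EuclideanSpace ℂ (Fin 3 × Fin 3 × Fin 3)) :
    (⟪b, wB a c ψ⟫ : ℂ) = ⟪prod3 a b c, ψ⟫ := by
  rw [inner_prod3, Finset.sum_comm]
  simp only [PiLp.inner_apply, RCLike.inner_apply, wB, PiLp.toLp_apply, Finset.sum_mul]
  exact Finset.sum_congr rfl fun j _ => Finset.sum_congr rfl fun i _ =>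
    Finset.sum_congr rfl fun k _ => by ring

lemma inner_wC (a b c : EuclideanSpace ℂ (Fin 3)) (ψ : EuclideanSpace ℂ (Fin 3 × Fin 3 × Fin 3)) :
    (⟪c, wC a b ψ⟫ : ℂ) = ⟪prod3 a b c, ψ⟫ := by
  rw [inner_prod3]
  simp only [PiLp.inner_apply, RCLike.inner_apply, wC, PiLp.toLp_apply, Finset.sum_mul]
  rw [Finset.sum_comm]
  refine Finset.sum_congr rfl fun i _ => ?_
  rw [Finset.sum_comm]
  exact Finset.sum_congr rfl fun j _ => Finset.sum_congr rfl fun k _ => by ring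

abbrev E3 := EuclideanSpace ℂ (Fin 3)

set_option maxHeartbeats 1000000 in
lemma exists_max_prod3 (ψ : EuclideanSpace ℂ (Fin 3 × Fin 3 × Fin 3))
    (S T U : Submodule ℂ E3) (x y z : E3)
    (hxS : x ∈ S) (hx : ‖x‖ = 1) (hyT : y ∈ T) (hy : ‖y‖ = 1) (hzU : z ∈ U) (hz : ‖z‖ = 1) :
    ∃ a b c : E3, a ∈ S ∧ ‖a‖ = 1 ∧ b ∈ T ∧ ‖b‖ = 1 ∧ c ∈ U ∧ ‖c‖ = 1 ∧
      ∀ a' b' c' : E3, a' ∈ S → ‖a'‖ = 1 → b' ∈ T → ‖b'‖ = 1 → c' ∈ U → ‖c'‖ = 1 →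
        ‖(⟪prod3 a' b' c', ψ⟫ : ℂ)‖ ≤ ‖(⟪prod3 a b c, ψ⟫ : ℂ)‖ := by
  have hcpt : ∀ V : Submodule ℂ E3, IsCompact {a : E3 | a ∈ V ∧ ‖a‖ = 1} := by
    intro V
    refine (isCompact_closedBall (0 : E3) 1).of_isClosed_subset ?_ ?_
    · exact (V.closed_of_finiteDimensional).inter (isClosed_eq continuous_norm continuous_const)
    · intro a ha
      simp only [Metric.mem_closedBall, dist_zero_right]
      exact le_of_eq ha.2
  set K : Set (E3 × E3 × E3) :=
    {a | a ∈ S ∧ ‖a‖ = 1} ×ˢ ({b | b ∈ T ∧ ‖b‖ = 1} ×ˢ {c | c ∈ U ∧ ‖c‖ = 1}) with hK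
  have hKc : IsCompact K := (hcpt S).prod ((hcpt T).prod (hcpt U))
  have hKne : K.Nonempty := ⟨(x, y, z), ⟨hxS, hx⟩, ⟨hyT, hy⟩, ⟨hzU, hz⟩⟩
  have hcont : Continuous fun q : E3 × E3 × E3 => ‖(⟪prod3 q.1 q.2.1 q.2.2, ψ⟫ : ℂ)‖ := by
    refine Continuous.norm ?_
    simp only [inner_prod3]
    refine continuous_finset_sum _ fun i _ => continuous_finset_sum _ fun j _ =>
      continuous_finset_sum _ fun k _ => ?_
    have h1 : Continuous fun q : E3 × E3 × E3 => q.1 i :=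
      (EuclideanSpace.proj i).continuous.comp continuous_fst
    have h2 : Continuous fun q : E3 × E3 × E3 => q.2.1 j :=
      (EuclideanSpace.proj j).continuous.comp (continuous_fst.comp continuous_snd)
    have h3 : Continuous fun q : E3 × E3 × E3 => q.2.2 k :=
      (EuclideanSpace.proj k).continuous.comp (continuous_snd.comp continuous_snd)
    exact ((((Complex.continuous_conj.comp h1).mul (Complex.continuous_conj.comp h2)).mul
      (Complex.continuous_conj.comp h3)).mul continuous_const)
  obtain ⟨⟨a, b, c⟩, hmem, hmax⟩ := hKc.exists_isMaxOn hKne hcont.continuousOn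
  obtain ⟨⟨haS, han⟩, ⟨hbT, hbn⟩, hcU, hcn⟩ := hmem
  refine ⟨a, b, c, haS, han, hbT, hbn, hcU, hcn, fun a' b' c' h1 h2 h3 h4 h5 h6 => ?_⟩
  exact isMaxOn_iff.mp hmax (a', b', c') ⟨⟨h1, h2⟩, ⟨h3, h4⟩, ⟨h5, h6⟩⟩

lemma orthonormal_restrict_single {x : E3} (hx : ‖x‖ = 1) :
    Orthonormal ℂ (({(0 : Fin 3)} : Set (Fin 3)).restrict ![x, 0, 0]) := by
  constructor
  · rintro ⟨i, hi⟩
    rcases hi with rfl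
    exact hx
  · rintro ⟨i, hi⟩ ⟨j, hj⟩ hij
    rcases hi with rfl
    rcases hj with rfl
    exact absurd rfl hij

lemma orthonormal_restrict_pair {x y : E3} (hx : ‖x‖ = 1) (hy : ‖y‖ = 1)
    (hxy : ⟪x, y⟫ = 0) :
    Orthonormal ℂ ((({0, 1} : Set (Fin 3))).restrict ![x, y, 0]) := by
  have hyx : (⟪y, x⟫ : ℂ) = 0 := inner_eq_zero_symm.mp hxy
  constructor
  · rintro ⟨i, hi⟩
    rcases hi with rfl | rfl
    · exact hx
    · exact hy
  · rintro ⟨i, hi⟩ ⟨j, hj⟩ hij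
    have hne : i ≠ j := fun h => hij (Subtype.ext h)
    rcases hi with rfl | rfl <;> rcases hj with rfl | rfl
    · exact absurd rfl hne
    · exact hxy
    · exact hyx
    · exact absurd rfl hne

lemma extend_single {x : E3} (hx : ‖x‖ = 1) :
    ∃ b : OrthonormalBasis (Fin 3) ℂ E3, b 0 = x := by
  have card : Module.finrank ℂ E3 = Fintype.card (Fin 3) := by simp
  obtain ⟨b, hb⟩ :=
    (orthonormal_restrict_single hx).exists_orthonormalBasis_extension_of_card_eq card
  exact ⟨b, by simpa using hb 0 rfl⟩

lemma extend_pair {x y : E3} (hx : ‖x‖ = 1) (hy : ‖y‖ = 1) (hxy : ⟪x, y⟫ = 0) :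
    ∃ b : OrthonormalBasis (Fin 3) ℂ E3, b 0 = x ∧ b 1 = y := by
  have card : Module.finrank ℂ E3 = Fintype.card (Fin 3) := by simp
  obtain ⟨b, hb⟩ :=
    (orthonormal_restrict_pair hx hy hxy).exists_orthonormalBasis_extension_of_card_eq card
  refine ⟨b, by simpa using hb 0 (Or.inl rfl), by simpa using hb 1 (Or.inr rfl)⟩

/-- **Generalized Schmidt decomposition of a three-qutrit pure state**: for every unit vector
`ψ` in `ℂ³ ⊗ ℂ³ ⊗ ℂ³` there are orthonormal bases `f, g, h` of the three factors in which the
overlap coefficients `⟨100|ψ⟩, ⟨010|ψ⟩, ⟨001|ψ⟩, ⟨200|ψ⟩, ⟨020|ψ⟩, ⟨002|ψ⟩, ⟨211|ψ⟩, ⟨121|ψ⟩,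
⟨112|ψ⟩` all vanish (writing `|ijk⟩ = fᵢ ⊗ gⱼ ⊗ hₖ`). -/
theorem generalized_schmidt_three_qutrits
    (ψ : EuclideanSpace ℂ (Fin 3 × Fin 3 × Fin 3)) (hψ : ‖ψ‖ = 1) :
    ∃ f g h : Fin 3 → EuclideanSpace ℂ (Fin 3),
      Orthonormal ℂ f ∧ Orthonormal ℂ g ∧ Orthonormal ℂ h ∧
      ⟪prod3 (f 1) (g 0) (h 0), ψ⟫ = 0 ∧
      ⟪prod3 (f 0) (g 1) (h 0), ψ⟫ = 0 ∧
      ⟪prod3 (f 0) (g 0) (h 1), ψ⟫ = 0 ∧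
      ⟪prod3 (f 2) (g 0) (h 0), ψ⟫ = 0 ∧
      ⟪prod3 (f 0) (g 2) (h 0), ψ⟫ = 0 ∧
      ⟪prod3 (f 0) (g 0) (h 2), ψ⟫ = 0 ∧
      ⟪prod3 (f 2) (g 1) (h 1), ψ⟫ = 0 ∧
      ⟪prod3 (f 1) (g 2) (h 1), ψ⟫ = 0 ∧
      ⟪prod3 (f 1) (g 1) (h 2), ψ⟫ = 0 := by
  -- Stage 1: maximize over all product unit vectors
  have hone : ‖(EuclideanSpace.single (0 : Fin 3) (1 : ℂ) : E3)‖ = 1 := by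
    simp [EuclideanSpace.norm_single]
  obtain ⟨e0, u0, v0, -, he0n, -, hu0n, -, hv0n, hmax1⟩ :=
    exists_max_prod3 ψ ⊤ ⊤ ⊤ _ _ _ trivial hone trivial hone trivial hone
  have hA1 : ∀ v : E3, ⟪v, e0⟫ = 0 → (⟪prod3 v u0 v0, ψ⟫ : ℂ) = 0 := by
    intro v hv
    have := key_lemma ⊤ (wA u0 v0 ψ) e0 trivial he0n
      (fun a _ ha => by
        rw [inner_wA, inner_wA]
        exact hmax1 a u0 v0 trivial ha trivial hu0n trivial hv0n) v trivial hv
    rwa [inner_wA] at this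
  have hB1 : ∀ v : E3, ⟪v, u0⟫ = 0 → (⟪prod3 e0 v v0, ψ⟫ : ℂ) = 0 := by
    intro v hv
    have := key_lemma ⊤ (wB e0 v0 ψ) u0 trivial hu0n
      (fun a _ ha => by
        rw [inner_wB, inner_wB]
        exact hmax1 e0 a v0 trivial he0n trivial ha trivial hv0n) v trivial hv
    rwa [inner_wB] at this
  have hC1 : ∀ v : E3, ⟪v, v0⟫ = 0 → (⟪prod3 e0 u0 v, ψ⟫ : ℂ) = 0 := by
    intro v hv
    have := key_lemma ⊤ (wC e0 u0 ψ) v0 trivial hv0n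
      (fun a _ ha => by
        rw [inner_wC, inner_wC]
        exact hmax1 e0 u0 a trivial he0n trivial hu0n trivial ha) v trivial hv
    rwa [inner_wC] at this
  -- orthogonal complements
  set S : Submodule ℂ E3 := (ℂ ∙ e0)ᗮ with hS
  set T : Submodule ℂ E3 := (ℂ ∙ u0)ᗮ with hT
  set U : Submodule ℂ E3 := (ℂ ∙ v0)ᗮ with hU
  -- unit vectors in each complement
  obtain ⟨fb, hfb0⟩ := extend_single he0n
  obtain ⟨gb, hgb0⟩ := extend_single hu0n
  obtain ⟨hb, hhb0⟩ := extend_single hv0n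
  have hfbS : fb 1 ∈ S := by
    rw [hS, Submodule.mem_orthogonal_singleton_iff_inner_right, ← hfb0]
    exact fb.orthonormal.2 (by decide)
  have hgbT : gb 1 ∈ T := by
    rw [hT, Submodule.mem_orthogonal_singleton_iff_inner_right, ← hgb0]
    exact gb.orthonormal.2 (by decide)
  have hhbU : hb 1 ∈ U := by
    rw [hU, Submodule.mem_orthogonal_singleton_iff_inner_right, ← hhb0]
    exact hb.orthonormal.2 (by decide)
  -- Stage 2: maximize over the complements
  obtain ⟨e1, u1, v1, he1S, he1n, hu1T, hu1n, hv1U, hv1n, hmax2⟩ :=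
    exists_max_prod3 ψ S T U _ _ _ hfbS (fb.orthonormal.1 1) hgbT (gb.orthonormal.1 1)
      hhbU (hb.orthonormal.1 1)
  have hA2 : ∀ v : E3, v ∈ S → ⟪v, e1⟫ = 0 → (⟪prod3 v u1 v1, ψ⟫ : ℂ) = 0 := by
    intro v hvS hv
    have := key_lemma S (wA u1 v1 ψ) e1 he1S he1n
      (fun a haS ha => by
        rw [inner_wA, inner_wA]
        exact hmax2 a u1 v1 haS ha hu1T hu1n hv1U hv1n) v hvS hv
    rwa [inner_wA] at this
  have hB2 : ∀ v : E3, v ∈ T → ⟪v, u1⟫ = 0 → (⟪prod3 e1 v v1, ψ⟫ : ℂ) = 0 := by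
    intro v hvT hv
    have := key_lemma T (wB e1 v1 ψ) u1 hu1T hu1n
      (fun a haT ha => by
        rw [inner_wB, inner_wB]
        exact hmax2 e1 a v1 he1S he1n haT ha hv1U hv1n) v hvT hv
    rwa [inner_wB] at this
  have hC2 : ∀ v : E3, v ∈ U → ⟪v, v1⟫ = 0 → (⟪prod3 e1 u1 v, ψ⟫ : ℂ) = 0 := by
    intro v hvU hv
    have := key_lemma U (wC e1 u1 ψ) v1 hv1U hv1n
      (fun a haU ha => by
        rw [inner_wC, inner_wC]
        exact hmax2 e1 u1 a he1S he1n hu1T hu1n haU ha) v hvU hv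
    rwa [inner_wC] at this
  -- build final bases
  obtain ⟨f, hf0, hf1⟩ := extend_pair he0n he1n
    (Submodule.mem_orthogonal_singleton_iff_inner_right.mp he1S)
  obtain ⟨g, hg0, hg1⟩ := extend_pair hu0n hu1n
    (Submodule.mem_orthogonal_singleton_iff_inner_right.mp hu1T)
  obtain ⟨h, hh0, hh1⟩ := extend_pair hv0n hv1n
    (Submodule.mem_orthogonal_singleton_iff_inner_right.mp hv1U)
  have hf2S : (f 2 : E3) ∈ S := by
    rw [hS, Submodule.mem_orthogonal_singleton_iff_inner_right, ← hf0]
    exact f.orthonormal.2 (by decide)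
  have hg2T : (g 2 : E3) ∈ T := by
    rw [hT, Submodule.mem_orthogonal_singleton_iff_inner_right, ← hg0]
    exact g.orthonormal.2 (by decide)
  have hh2U : (h 2 : E3) ∈ U := by
    rw [hU, Submodule.mem_orthogonal_singleton_iff_inner_right, ← hh0]
    exact h.orthonormal.2 (by decide)
  refine ⟨⇑f, ⇑g, ⇑h, f.orthonormal, g.orthonormal, h.orthonormal, ?_, ?_, ?_, ?_, ?_, ?_, ?_, ?_, ?_⟩
  · rw [hf1, hg0, hh0]
    exact hA1 e1 (inner_eq_zero_symm.mp
      (Submodule.mem_orthogonal_singleton_iff_inner_right.mp he1S))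
  · rw [hf0, hg1, hh0]
    exact hB1 u1 (inner_eq_zero_symm.mp
      (Submodule.mem_orthogonal_singleton_iff_inner_right.mp hu1T))
  · rw [hf0, hg0, hh1]
    exact hC1 v1 (inner_eq_zero_symm.mp
      (Submodule.mem_orthogonal_singleton_iff_inner_right.mp hv1U))
  · rw [hg0, hh0]
    exact hA1 (f 2) (inner_eq_zero_symm.mp
      (Submodule.mem_orthogonal_singleton_iff_inner_right.mp hf2S))
  · rw [hf0, hh0]
    exact hB1 (g 2) (inner_eq_zero_symm.mp
      (Submodule.mem_orthogonal_singleton_iff_inner_right.mp hg2T))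
  · rw [hf0, hg0]
    exact hC1 (h 2) (inner_eq_zero_symm.mp
      (Submodule.mem_orthogonal_singleton_iff_inner_right.mp hh2U))
  · rw [hg1, hh1]
    refine hA2 (f 2) hf2S ?_
    rw [← hf1]
    exact f.orthonormal.2 (by decide)
  · rw [hf1, hh1]
    refine hB2 (g 2) hg2T ?_
    rw [← hg1]
    exact g.orthonormal.2 (by decide)
  · rw [hf1, hg1]
    refine hC2 (h 2) hh2U ?_
    rw [← hh1]
    exact h.orthonormal.2 (by decide)
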